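/- Let F be a set-valued map from a finite-dimensional normed space X to R^p, Lipschitz around x, and let y ∈ F(x) be a properly minimal element of F(x) with respect to a pointed closed convex cone P with nonempty interior. Let S be a nonempty compact subset of X × R^p. Then the set cl(⋃_{(v,w) ∈ S} (w + DF↑((x,y); v))) is P-bounded, i.e., its recession cone intersects -P only at 0. -/

import Mathlib

open Filter Topology Pointwise

/-- Contingent cone to `S` at `z`. -/
def contingentCone {E : Type*} [NormedAddCommGroup E] [NormedSpace ℝ E]
    (S : Set E) (z : E) : Set E :=
  {v | ∃ h : ℕ → ℝ, ∃ vk : ℕ → E, (∀ k, 0 < h k) ∧ Tendsto h atTop (𝓝 0) ∧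
    Tendsto vk atTop (𝓝 v) ∧ ∀ k, z + h k • vk k ∈ S}

/-- Recession cone of `S`. -/
def recessionCone {E : Type*} [NormedAddCommGroup E] [NormedSpace ℝ E]
    (S : Set E) : Set E :=
  {y | ∃ h : ℕ → ℝ, ∃ yk : ℕ → E, (∀ k, 0 < h k) ∧ Tendsto h atTop (𝓝 0) ∧
    (∀ k, yk k ∈ S) ∧ Tendsto (fun k => h k • yk k) atTop (𝓝 y)}

/-- Set of minimal elements of `S` with respect to the ordering cone `P`. -/
def minimalSet {E : Type*} [NormedAddCommGroup E] [NormedSpace ℝ E]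
    (S P : Set E) : Set E :=
  {y | y ∈ S ∧ ((fun d => y - d) '' P) ∩ S = {y}}

/-- Contingent derivative of a set-valued map `F` at `(x, y)` in direction `v`. -/
def contDeriv {X E : Type*} [NormedAddCommGroup X] [NormedSpace ℝ X]
    [NormedAddCommGroup E] [NormedSpace ℝ E]
    (F : X → Set E) (x : X) (y : E) (v : X) : Set E :=
  {w | ∃ h : ℕ → ℝ, ∃ vk : ℕ → X, ∃ wk : ℕ → E, (∀ k, 0 < h k) ∧
    Tendsto h atTop (𝓝 0) ∧ Tendsto vk atTop (𝓝 v) ∧ Tendsto wk atTop (𝓝 w) ∧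
    ∀ k, y + h k • wk k ∈ F (x + h k • vk k)}

/-- `F` is Lipschitz (with constant `l`) on a neighborhood of `x`. -/
def LipschitzAround {X E : Type*} [NormedAddCommGroup X] [NormedSpace ℝ X]
    [NormedAddCommGroup E] [NormedSpace ℝ E]
    (F : X → Set E) (x : X) (l : ℝ) : Prop :=
  ∃ O ∈ 𝓝 x, ∀ x1 ∈ O, ∀ x2 ∈ O,
    F x1 ⊆ F x2 + Metric.closedBall (0 : E) (l * ‖x1 - x2‖)

lemma contingentCone_smul_mem {E : Type*} [NormedAddCommGroup E] [NormedSpace ℝ E]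
    {S : Set E} {z : E} {t : E} (ht : t ∈ contingentCone S z) {c : ℝ} (hc : 0 < c) :
    c • t ∈ contingentCone S z := by
  obtain ⟨h, vk, hpos, hh0, hvk, hmem⟩ := ht
  refine ⟨fun k => h k / c, fun k => c • vk k, fun k => div_pos (hpos k) hc, ?_, ?_, ?_⟩
  · simpa using hh0.div_const c
  · exact hvk.const_smul c
  · intro k
    have : (h k / c) • (c • vk k) = h k • vk k := by
      rw [smul_smul, div_mul_cancel₀ _ hc.ne']
    rw [this]; exact hmem k

lemma contingentCone_closure_subset {E : Type*} [NormedAddCommGroup E] [NormedSpace ℝ E]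
    {S : Set E} {z : E} {a : E} (ha : a ∈ closure (contingentCone S z)) :
    a ∈ contingentCone S z := by
  obtain ⟨u, hu, hua⟩ := mem_closure_iff_seq_limit.mp ha
  have key : ∀ j : ℕ, ∃ (h : ℝ) (v : E), 0 < h ∧ h < 1/(j+1) ∧ ‖v - u j‖ < 1/(j+1)
      ∧ z + h • v ∈ S := by
    intro j
    obtain ⟨h, vk, hpos, hh0, hvk, hmem⟩ := hu j
    have h1 : ∀ᶠ k in atTop, h k < 1/(j+1) := hh0.eventually_lt_const (by positivity)
    have h2 : ∀ᶠ k in atTop, dist (vk k) (u j) < 1/(j+1) :=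
      Metric.tendsto_nhds.mp hvk _ (by positivity)
    obtain ⟨k, hk1, hk2⟩ := (h1.and h2).exists
    exact ⟨h k, vk k, hpos k, hk1, by rwa [← dist_eq_norm], hmem k⟩
  choose H V Hpos Hlt Vlt Hmem using key
  have hone : Tendsto (fun j : ℕ => 1/((j:ℝ)+1)) atTop (𝓝 0) :=
    tendsto_one_div_add_atTop_nhds_zero_nat
  refine ⟨H, V, Hpos, ?_, ?_, Hmem⟩
  · exact squeeze_zero (fun j => (Hpos j).le) (fun j => (Hlt j).le) hone
  · rw [← tendsto_sub_nhds_zero_iff]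
    refine squeeze_zero_norm (f := fun j => V j - a) (a := fun j => 1/((j:ℝ)+1) + ‖u j - a‖)
      (fun j => ?_) ?_
    · calc ‖V j - a‖ ≤ ‖V j - u j‖ + ‖u j - a‖ := norm_sub_le_norm_sub_add_norm_sub _ _ _
        _ ≤ 1/((j:ℝ)+1) + ‖u j - a‖ := by
            exact add_le_add (Vlt j).le le_rfl
    · have : Tendsto (fun j => ‖u j - a‖) atTop (𝓝 0) := by
        rw [← tendsto_sub_nhds_zero_iff] at hua
        simpa using hua.norm
      simpa using hone.add this

lemma contDeriv_approx {p : ℕ} {X : Type*} [NormedAddCommGroup X] [NormedSpace ℝ X]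
    {P : Set (EuclideanSpace ℝ (Fin p))}
    {F : X → Set (EuclideanSpace ℝ (Fin p))} {x : X} {l : ℝ} (hl : 0 ≤ l)
    (hLip : LipschitzAround F x l) {y : EuclideanSpace ℝ (Fin p)}
    {v : X} {w : EuclideanSpace ℝ (Fin p)}
    (hw : w ∈ contDeriv (fun x' => F x' + P) x y v) :
    ∃ t ∈ contingentCone (F x + P) y, ‖w - t‖ ≤ l * ‖v‖ := by
  obtain ⟨O, hO, hOlip⟩ := hLip
  obtain ⟨h, vk, wk, hpos, hh0, hvk, hwk, hmem⟩ := hw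
  have hx : x ∈ O := mem_of_mem_nhds hO
  have hten : Tendsto (fun k => x + h k • vk k) atTop (𝓝 x) := by
    have := (hh0.smul hvk : Tendsto (fun k => h k • vk k) atTop (𝓝 ((0:ℝ) • v)))
    simpa using tendsto_const_nhds.add this
  obtain ⟨N, hN⟩ := eventually_atTop.mp (hten.eventually_mem hO)
  have key : ∀ k : ℕ, ∃ e : EuclideanSpace ℝ (Fin p), ‖e‖ ≤ l * ‖vk (k+N)‖ ∧
      y + h (k+N) • (wk (k+N) - e) ∈ F x + P := by
    intro k
    have hin : x + h (k+N) • vk (k+N) ∈ O := hN (k+N) (by omega)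
    obtain ⟨a, haF, q, hq, haq⟩ := Set.mem_add.mp (hmem (k+N))
    obtain ⟨c, hc, b, hb, hcb⟩ := Set.mem_add.mp (hOlip _ hin x hx haF)
    have hnorm : ‖x + h (k+N) • vk (k+N) - x‖ = h (k+N) * ‖vk (k+N)‖ := by
      rw [add_sub_cancel_left, norm_smul, Real.norm_eq_abs, abs_of_pos (hpos _)]
    have hb' : ‖b‖ ≤ l * (h (k+N) * ‖vk (k+N)‖) := by
      have := Metric.mem_closedBall.mp hb
      rw [dist_zero_right] at this
      rwa [hnorm] at this
    refine ⟨(h (k+N))⁻¹ • b, ?_, ?_⟩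
    · rw [norm_smul, Real.norm_eq_abs, abs_of_pos (inv_pos.mpr (hpos _))]
      calc (h (k+N))⁻¹ * ‖b‖ ≤ (h (k+N))⁻¹ * (l * (h (k+N) * ‖vk (k+N)‖)) :=
            mul_le_mul_of_nonneg_left hb' (inv_pos.mpr (hpos _)).le
        _ = l * ‖vk (k+N)‖ := by field_simp [(hpos (k+N)).ne']
    · have : y + h (k+N) • (wk (k+N) - (h (k+N))⁻¹ • b) = c + q := by
        rw [smul_sub, smul_inv_smul₀ (hpos (k+N)).ne']
        have h2 : y + h (k+N) • wk (k+N) = c + b + q := by rw [hcb, haq]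
        calc y + (h (k+N) • wk (k+N) - b) = (y + h (k+N) • wk (k+N)) - b := by abel
          _ = (c + b + q) - b := by rw [h2]
          _ = c + q := by abel
      rw [this]
      exact Set.add_mem_add hc hq
  choose e he1 he2 using key
  obtain ⟨M, hM⟩ := (hvk.norm.comp (tendsto_add_atTop_nat N)).bddAbove_range
  have heM : ∀ k, e k ∈ Metric.closedBall (0 : EuclideanSpace ℝ (Fin p)) (l * M) := by
    intro k
    rw [Metric.mem_closedBall, dist_zero_right]
    refine (he1 k).trans (mul_le_mul_of_nonneg_left ?_ hl)
    exact hM ⟨k, rfl⟩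
  obtain ⟨einf, -, φ, hφ, hφten⟩ :=
    tendsto_subseq_of_bounded Metric.isBounded_closedBall heM
  have hshift : Tendsto (fun j => φ j + N) atTop atTop :=
    (tendsto_add_atTop_nat N).comp hφ.tendsto_atTop
  refine ⟨w - einf, ⟨fun j => h (φ j + N), fun j => wk (φ j + N) - e (φ j),
    fun j => hpos _, hh0.comp hshift, ?_, fun j => he2 (φ j)⟩, ?_⟩
  · exact (hwk.comp hshift).sub hφten
  · have h1 : Tendsto (fun j => ‖e (φ j)‖) atTop (𝓝 ‖einf‖) := hφten.norm
    have h2 : Tendsto (fun j => l * ‖vk (φ j + N)‖) atTop (𝓝 (l * ‖v‖)) :=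
      ((hvk.comp hshift).norm).const_mul l
    have : ‖einf‖ ≤ l * ‖v‖ :=
      le_of_tendsto_of_tendsto' h1 h2 (fun j => he1 (φ j))
    simpa using this

lemma contDeriv_nonempty {p : ℕ} {X : Type*} [NormedAddCommGroup X] [NormedSpace ℝ X]
    {P : Set (EuclideanSpace ℝ (Fin p))} (hP0 : (0 : EuclideanSpace ℝ (Fin p)) ∈ P)
    {F : X → Set (EuclideanSpace ℝ (Fin p))} {x : X} {l : ℝ} (hl : 0 ≤ l)
    (hLip : LipschitzAround F x l) {y : EuclideanSpace ℝ (Fin p)} (hy : y ∈ F x) (v : X) :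
    (contDeriv (fun x' => F x' + P) x y v).Nonempty := by
  obtain ⟨O, hO, hOlip⟩ := hLip
  have hx : x ∈ O := mem_of_mem_nhds hO
  have hten : Tendsto (fun k : ℕ => x + (1/((k:ℝ)+1)) • v) atTop (𝓝 x) := by
    have := (tendsto_one_div_add_atTop_nhds_zero_nat (𝕜 := ℝ)).smul_const v
    simpa using tendsto_const_nhds.add this
  obtain ⟨N, hN⟩ := eventually_atTop.mp (hten.eventually_mem hO)
  set h : ℕ → ℝ := fun k => 1/((k:ℝ)+N+1) with hh
  have hposN : ∀ k, 0 < h k := fun k => by positivity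
  have hh0 : Tendsto h atTop (𝓝 0) := by
    have := (tendsto_one_div_add_atTop_nhds_zero_nat (𝕜 := ℝ)).comp (tendsto_add_atTop_nat N)
    refine this.congr fun k => ?_
    simp only [Function.comp_apply, hh]; push_cast; ring
  have hmemO : ∀ k, x + h k • v ∈ O := by
    intro k
    have h0 := hN (k+N) (by omega)
    have heq : h k = 1/((((k+N):ℕ):ℝ) + 1) := by
      simp only [hh]; push_cast; ring
    rw [heq]; exact h0
  have key : ∀ k : ℕ, ∃ wv : EuclideanSpace ℝ (Fin p), ‖wv‖ ≤ l * ‖v‖ ∧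
      y + h k • wv ∈ F (x + h k • v) + P := by
    intro k
    obtain ⟨a, ha, b, hb, hab⟩ := Set.mem_add.mp (hOlip x hx _ (hmemO k) hy)
    have hnorm : ‖x - (x + h k • v)‖ = h k * ‖v‖ := by
      have : x - (x + h k • v) = -(h k • v) := by abel
      rw [this, norm_neg, norm_smul, Real.norm_eq_abs, abs_of_pos (hposN k)]
    have hb' : ‖b‖ ≤ l * (h k * ‖v‖) := by
      have := Metric.mem_closedBall.mp hb
      rw [dist_zero_right] at this
      rwa [hnorm] at this
    refine ⟨-((h k)⁻¹ • b), ?_, ?_⟩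
    · rw [norm_neg, norm_smul, Real.norm_eq_abs, abs_of_pos (inv_pos.mpr (hposN k))]
      calc (h k)⁻¹ * ‖b‖ ≤ (h k)⁻¹ * (l * (h k * ‖v‖)) :=
            mul_le_mul_of_nonneg_left hb' (inv_pos.mpr (hposN k)).le
        _ = l * ‖v‖ := by field_simp [(hposN k).ne']
    · have : y + h k • (-((h k)⁻¹ • b)) = a := by
        rw [smul_neg, smul_inv_smul₀ (hposN k).ne']
        calc y + -b = (a + b) + -b := by rw [hab]
          _ = a := by abel
      rw [this]
      exact ⟨a, ha, 0, hP0, add_zero a⟩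
  choose w hw1 hw2 using key
  have hwB : ∀ k, w k ∈ Metric.closedBall (0 : EuclideanSpace ℝ (Fin p)) (l * ‖v‖) := by
    intro k; rw [Metric.mem_closedBall, dist_zero_right]; exact hw1 k
  obtain ⟨winf, -, φ, hφ, hφten⟩ :=
    tendsto_subseq_of_bounded Metric.isBounded_closedBall hwB
  exact ⟨winf, fun j => h (φ j), fun _ => v, fun j => w (φ j),
    fun j => hposN _, hh0.comp hφ.tendsto_atTop, tendsto_const_nhds, hφten,
    fun j => hw2 (φ j)⟩

theorem stmt19 {p : ℕ} {X : Type*} [NormedAddCommGroup X] [NormedSpace ℝ X]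
    [FiniteDimensional ℝ X]
    (P : Set (EuclideanSpace ℝ (Fin p)))
    (hPconv : Convex ℝ P) (hPcone : ∀ (c : ℝ), 0 ≤ c → ∀ x ∈ P, c • x ∈ P)
    (hPclosed : IsClosed P) (hP0 : (0 : EuclideanSpace ℝ (Fin p)) ∈ P)
    (hPpointed : P ∩ (-P) = {0}) (hPint : (interior P).Nonempty)
    (F : X → Set (EuclideanSpace ℝ (Fin p))) (x : X) (l : ℝ) (hl : 0 ≤ l)
    (hLip : LipschitzAround F x l)
    (y : EuclideanSpace ℝ (Fin p))
    (hymin : y ∈ minimalSet (F x) P)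
    (hyproper : contingentCone (F x + P) y ∩ (-P) = {0})
    (S : Set (X × EuclideanSpace ℝ (Fin p)))
    (hSne : S.Nonempty) (hS : IsCompact S) :
    recessionCone (closure
      (⋃ q ∈ S, (fun z => q.2 + z) '' contDeriv (fun x' => F x' + P) x y q.1))
      ∩ (-P) = {0} := by
  set T := contingentCone (F x + P) y with hT
  set A := ⋃ q ∈ S, (fun z : EuclideanSpace ℝ (Fin p) => q.2 + z) ''
    contDeriv (fun x' => F x' + P) x y q.1 with hA
  rw [Set.eq_singleton_iff_unique_mem]
  constructor
  · refine ⟨?_, ?_⟩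
    · obtain ⟨q0, hq0⟩ := hSne
      obtain ⟨u0, hu0⟩ := contDeriv_nonempty hP0 hl hLip hymin.1 q0.1
      have hmemA : q0.2 + u0 ∈ A := Set.mem_iUnion₂.mpr ⟨q0, hq0, ⟨u0, hu0, rfl⟩⟩
      refine ⟨fun k => 1/((k:ℝ)+1), fun _ => q0.2 + u0, fun k => by positivity,
        tendsto_one_div_add_atTop_nhds_zero_nat, fun _ => subset_closure hmemA, ?_⟩
      simpa using (tendsto_one_div_add_atTop_nhds_zero_nat (𝕜 := ℝ)).smul_const (q0.2 + u0)
    · rw [Set.mem_neg, neg_zero]; exact hP0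
  · rintro z ⟨hz, hzP⟩
    obtain ⟨h, zk, hpos, hh0, hzk, hzten⟩ := hz
    have key : ∀ k, ∃ z' ∈ A, dist (zk k) z' < 1 :=
      fun k => Metric.mem_closure_iff.mp (hzk k) 1 one_pos
    choose z' hz'A hz'd using key
    have key2 : ∀ k, ∃ q ∈ S, ∃ u ∈ contDeriv (fun x' => F x' + P) x y q.1,
        z' k = q.2 + u := by
      intro k
      obtain ⟨q, hq, u, hu, huz⟩ := Set.mem_iUnion₂.mp (hz'A k)
      exact ⟨q, hq, u, hu, huz.symm⟩
    choose q hqS u hu hz'eq using key2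
    have key3 : ∀ k, ∃ t ∈ T, ‖u k - t‖ ≤ l * ‖(q k).1‖ :=
      fun k => contDeriv_approx hl hLip (hu k)
    choose t htT hte using key3
    obtain ⟨C, hC⟩ := hS.isBounded.subset_closedBall 0
    have hqC : ∀ k, ‖q k‖ ≤ C := by
      intro k
      have := hC (hqS k)
      rwa [Metric.mem_closedBall, dist_zero_right] at this
    have e1 : Tendsto (fun k => h k • (z' k - zk k)) atTop (𝓝 0) := by
      refine squeeze_zero_norm (a := fun k => h k * 1) (fun k => ?_) (by simpa using hh0)
      rw [norm_smul, Real.norm_eq_abs, abs_of_pos (hpos k)]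
      refine mul_le_mul_of_nonneg_left ?_ (hpos k).le
      rw [← dist_eq_norm, dist_comm]
      exact (hz'd k).le
    have e2 : Tendsto (fun k => h k • (q k).2) atTop (𝓝 0) := by
      refine squeeze_zero_norm (a := fun k => h k * C) (fun k => ?_)
        (by simpa using hh0.mul_const C)
      rw [norm_smul, Real.norm_eq_abs, abs_of_pos (hpos k)]
      exact mul_le_mul_of_nonneg_left ((norm_snd_le (q k)).trans (hqC k)) (hpos k).le
    have e3 : Tendsto (fun k => h k • (u k - t k)) atTop (𝓝 0) := by
      refine squeeze_zero_norm (a := fun k => h k * (l * C)) (fun k => ?_)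
        (by simpa using hh0.mul_const (l * C))
      rw [norm_smul, Real.norm_eq_abs, abs_of_pos (hpos k)]
      refine mul_le_mul_of_nonneg_left ((hte k).trans ?_) (hpos k).le
      exact mul_le_mul_of_nonneg_left ((norm_fst_le (q k)).trans (hqC k)) hl
    have hid : ∀ k, t k = zk k + (z' k - zk k) - (q k).2 - (u k - t k) := by
      intro k; rw [hz'eq k]; abel
    have hconv : Tendsto (fun k => h k • t k) atTop (𝓝 z) := by
      have H := ((hzten.add e1).sub e2).sub e3
      simp only [add_zero, sub_zero] at H
      refine H.congr fun k => ?_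
      rw [hz'eq k]
      simp only [smul_add, smul_sub]
      abel
    have hzcl : z ∈ closure T :=
      mem_closure_iff_seq_limit.mpr ⟨fun k => h k • t k,
        fun k => contingentCone_smul_mem (htT k) (hpos k), hconv⟩
    have hzT : z ∈ T := contingentCone_closure_subset hzcl
    have : z ∈ T ∩ (-P) := ⟨hzT, hzP⟩
    rw [hT, hyproper] at this
    exact this
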